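/- Let D ⊂ ℂ be an open disc, U a contractible complex manifold, m_1,…,m_{n+k} ≥ 0 integers, p_1,…,p_{n+k}: U → D holomorphic maps, and a: U×D → ℂ* a holomorphic nonvanishing function; consider the family of Abelian differentials α_u := a(u,z)(z−p_1(u))^{m_1}⋯(z−p_{n+k}(u))^{m_{n+k}} dz on D. Then: (a) for every i,j, the function u ↦ ∫_{p_i(u)}^{p_j(u)} α_u (the integral along any path in D from p_i(u) to p_j(u), well-defined since α_u is a holomorphic 1-form on the simply connected D) is holomorphic on U; (b) for every i and every u ∈ U, the functionals {∫_{γ_{ij}(u)} : j ≠ i} form a basis of the dual of 𝐇¹(ℂ_{D,P})_u; (c) the assignment u ↦ (Σ_j c_j γ_{ij} ↦ Σ_j c_j ∫_{γ_{ij}} α_u) determines a holomorphic section of the ℂ-local system 𝐇¹(ℂ_{D,P}) over U. -/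

import Mathlib

/-- The integral `∫_a^b f(z) dz` of a function `f : ℂ → ℂ` along the straight segment
from `a` to `b` (in a convex domain, such as a disc, this computes the path integral
along any path from `a` to `b` when `f` is holomorphic). -/
noncomputable def pathIntegral (f : ℂ → ℂ) (a b : ℂ) : ℂ :=
  ∫ t in (0 : ℝ)..1, (b - a) * f (a + (t : ℂ) * (b - a))

/-- The line of constant functions in `ℂ^N`. -/
noncomputable def constantsSubmodule (N : ℕ) : Submodule ℂ (Fin N → ℂ) :=
  Submodule.span ℂ {(fun _ => (1 : ℂ))}

/-- The fiber of the ℂ-local system `𝐇¹(ℂ_{D,P})`: since `D` and `U` are contractible,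
`𝐇¹(ℂ_{D,P})_u ≅ 𝐇⁰(⊕_i ℂ_{p_i(u)})/𝐇⁰(ℂ_D) ≅ ℂ^{n+k}/ℂ`, a local system of rank
`n+k-1` over `U` (here `N = n+k`). -/
abbrev RelH1 (N : ℕ) := (Fin N → ℂ) ⧸ constantsSubmodule N

/-- The functional on `𝐇¹(ℂ_{D,P}) ≅ ℂ^N/ℂ` given by the relative homology class
`γ_{ij}` of a path in `D` from `p_i` to `p_j`: it sends the class of
`(g(p_1),…,g(p_N))` (values at the marked points of a primitive `g` of the
differential) to `g(p_j) - g(p_i)`. -/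
noncomputable def gammaIJ (N : ℕ) (i j : Fin N) : Module.Dual ℂ (RelH1 N) :=
  (constantsSubmodule N).liftQ ((LinearMap.proj j : (Fin N → ℂ) →ₗ[ℂ] ℂ) - LinearMap.proj i)
    (by
      rw [constantsSubmodule, Submodule.span_le, Set.singleton_subset_iff]
      simp [LinearMap.mem_ker, LinearMap.sub_apply, LinearMap.proj_apply])

open Metric Set MeasureTheory intervalIntegral Complex

/-- Cauchy coefficient estimate. -/
lemma cauchy_coeff_bound {φ : ℂ → ℂ} {r M : ℝ} (hr : 0 < r)
    (hφ : DifferentiableOn ℂ φ (closedBall 0 r))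
    (hM : ∀ z ∈ closedBall (0:ℂ) r, ‖φ z‖ ≤ M) (n : ℕ) :
    ‖(cauchyPowerSeries φ 0 r).coeff n‖ ≤ M / r ^ n := by
  have hM0 : 0 ≤ M := le_trans (norm_nonneg _) (hM 0 (mem_closedBall_self hr.le))
  have hcont : ContinuousOn (fun θ : ℝ => ‖φ (circleMap 0 r θ)‖) (Icc 0 (2 * Real.pi)) := by
    apply (hφ.continuousOn.comp (continuous_circleMap 0 r).continuousOn ?_).norm
    intro θ _
    simp [circleMap, _root_.abs_of_nonneg hr.le]
  have hint : IntervalIntegrable (fun θ : ℝ => ‖φ (circleMap 0 r θ)‖) volume 0 (2 * Real.pi) := by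
    apply ContinuousOn.intervalIntegrable
    rwa [uIcc_of_le (by positivity)]
  have h1 : (∫ θ : ℝ in (0)..2 * Real.pi, ‖φ (circleMap 0 r θ)‖) ≤ 2 * Real.pi * M := by
    calc (∫ θ : ℝ in (0)..2 * Real.pi, ‖φ (circleMap 0 r θ)‖)
        ≤ ∫ _ : ℝ in (0)..2 * Real.pi, M := by
          apply intervalIntegral.integral_mono_on Real.two_pi_pos.le hint
            intervalIntegrable_const
          intro θ _
          apply hM
          simp [circleMap, _root_.abs_of_nonneg hr.le]
      _ = 2 * Real.pi * M := by simp [mul_comm]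
  have h2 : ‖(cauchyPowerSeries φ 0 r).coeff n‖ ≤ ‖cauchyPowerSeries φ 0 r n‖ := by
    have h := (cauchyPowerSeries φ 0 r n).le_opNorm (1 : Fin n → ℂ)
    simp only [Pi.one_apply, norm_one, Finset.prod_const_one, mul_one] at h
    exact h
  refine h2.trans ((norm_cauchyPowerSeries_le φ 0 r n).trans ?_)
  rw [_root_.abs_of_nonneg hr.le]
  have : (2 * Real.pi)⁻¹ * (∫ θ : ℝ in (0)..2 * Real.pi, ‖φ (circleMap 0 r θ)‖) ≤ M := by
    rw [inv_mul_le_iff₀ Real.two_pi_pos]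
    linarith [h1]
  calc ((2 * Real.pi)⁻¹ * ∫ θ : ℝ in (0)..2 * Real.pi, ‖φ (circleMap 0 r θ)‖) * r⁻¹ ^ n
      ≤ M * r⁻¹ ^ n := by
        apply mul_le_mul_of_nonneg_right this (by positivity)
    _ = M / r ^ n := by rw [inv_pow]; rw [div_eq_mul_inv]

/-- Power series at 0 with radius r, packaged. -/
lemma cauchy_series_on_ball {φ : ℂ → ℂ} {r : ℝ} (hr : 0 < r)
    (hφ : DifferentiableOn ℂ φ (closedBall 0 r)) :
    HasFPowerSeriesOnBall φ (cauchyPowerSeries φ 0 r) 0 (ENNReal.ofReal r) := by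
  have h := hφ.hasFPowerSeriesOnBall (R := ⟨r, hr.le⟩) (by exact_mod_cast hr)
  convert h using 2
  · rfl
  · rfl
  · exact ENNReal.ofReal_eq_coe_nnreal hr.le

/-- Cauchy estimate for the derivative at the center. -/
lemma cauchy_deriv_bound {φ : ℂ → ℂ} {r M : ℝ} (hr : 0 < r)
    (hφ : DifferentiableOn ℂ φ (closedBall 0 r))
    (hM : ∀ z ∈ closedBall (0:ℂ) r, ‖φ z‖ ≤ M) :
    ‖deriv φ 0‖ ≤ M / r := by
  have hp := cauchy_series_on_ball hr hφ
  have hd : deriv φ 0 = (cauchyPowerSeries φ 0 r).coeff 1 := by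
    rw [hp.hasFPowerSeriesAt.deriv]; rfl
  rw [hd]
  simpa using cauchy_coeff_bound hr hφ hM 1

/-- Second order Taylor estimate at the center. -/
lemma cauchy_taylor_bound {φ : ℂ → ℂ} {r M : ℝ} (hr : 0 < r)
    (hφ : DifferentiableOn ℂ φ (closedBall 0 r))
    (hM : ∀ z ∈ closedBall (0:ℂ) r, ‖φ z‖ ≤ M) {w : ℂ} (hw : ‖w‖ ≤ r / 2) :
    ‖φ w - φ 0 - w * deriv φ 0‖ ≤ 2 * M * ‖w‖ ^ 2 / r ^ 2 := by
  have hM0 : 0 ≤ M := le_trans (norm_nonneg _) (hM 0 (mem_closedBall_self hr.le))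
  have hp := cauchy_series_on_ball hr hφ
  set p := cauchyPowerSeries φ 0 r with hpdef
  have hwball : w ∈ Metric.eball (0 : ℂ) (ENNReal.ofReal r) := by
    rw [Metric.mem_eball, edist_zero_right, ← ofReal_norm]
    exact ENNReal.ofReal_lt_ofReal_iff_of_nonneg (norm_nonneg w) |>.2 (by linarith)
  have hsum : HasSum (fun n : ℕ => w ^ n • p.coeff n) (φ w) := by
    have := hp.hasSum hwball
    simp only [FormalMultilinearSeries.apply_eq_pow_smul_coeff, zero_add] at this
    exact this
  have htail : HasSum (fun n : ℕ => w ^ (n + 2) • p.coeff (n + 2))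
      (φ w - ∑ i ∈ Finset.range 2, w ^ i • p.coeff i) :=
    ((hasSum_nat_add_iff' 2).2 hsum)
  have hc0 : p.coeff 0 = φ 0 := by
    simpa using hp.coeff_zero (fun _ => 1)
  have hc1 : p.coeff 1 = deriv φ 0 := by
    rw [hp.hasFPowerSeriesAt.deriv]; rfl
  have hsum2 : ∑ i ∈ Finset.range 2, w ^ i • p.coeff i = φ 0 + w * deriv φ 0 := by
    rw [Finset.sum_range_succ, Finset.sum_range_one, hc0, hc1]
    simp [smul_eq_mul]
  rw [hsum2] at htail
  have heq : φ w - φ 0 - w * deriv φ 0 = ∑' n : ℕ, w ^ (n + 2) • p.coeff (n + 2) := by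
    rw [htail.tsum_eq]; ring
  rw [heq]
  have hq : ‖w‖ / r ≤ 1 / 2 := by
    rw [div_le_iff₀ hr]; linarith
  have hbound : ∀ n : ℕ, ‖w ^ (n + 2) • p.coeff (n + 2)‖ ≤
      M * ‖w‖ ^ 2 / r ^ 2 * (1 / 2) ^ n := by
    intro n
    have hcb := cauchy_coeff_bound hr hφ hM (n + 2)
    rw [norm_smul, norm_pow]
    calc ‖w‖ ^ (n + 2) * ‖p.coeff (n + 2)‖ ≤ ‖w‖ ^ (n + 2) * (M / r ^ (n + 2)) :=
          mul_le_mul_of_nonneg_left hcb (by positivity)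
      _ = M * ‖w‖ ^ 2 / r ^ 2 * (‖w‖ / r) ^ n := by
          rw [div_pow]
          field_simp
          ring
      _ ≤ M * ‖w‖ ^ 2 / r ^ 2 * (1 / 2) ^ n := by
          apply mul_le_mul_of_nonneg_left _ (by positivity)
          exact pow_le_pow_left₀ (by positivity) hq n
  have hgeom : HasSum (fun n : ℕ => M * ‖w‖ ^ 2 / r ^ 2 * (1 / 2) ^ n)
      (M * ‖w‖ ^ 2 / r ^ 2 * 2) := by
    have := (hasSum_geometric_of_lt_one (by norm_num : (0:ℝ) ≤ 1/2)
      (by norm_num : (1:ℝ)/2 < 1)).mul_left (M * ‖w‖ ^ 2 / r ^ 2)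
    norm_num at this ⊢
    exact this
  have := tsum_of_norm_bounded hgeom hbound
  calc ‖∑' n : ℕ, w ^ (n + 2) • p.coeff (n + 2)‖ ≤ M * ‖w‖ ^ 2 / r ^ 2 * 2 := this
    _ = 2 * M * ‖w‖ ^ 2 / r ^ 2 := by ring

section Directional

variable {E : Type*} [NormedAddCommGroup E] [NormedSpace ℂ E]

/-- The restriction of a holomorphic function to a complex line through `x₀`. -/
lemma line_restrict {g : E → ℂ} {x₀ : E} {δ : ℝ} (hδ : 0 < δ)
    (hg : ∀ x ∈ ball x₀ δ, DifferentiableAt ℂ g x) (v : E) (hv : v ≠ 0) :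
    DifferentiableOn ℂ (fun w : ℂ => g (x₀ + w • v)) (closedBall 0 (δ / (2 * ‖v‖))) ∧
      HasDerivAt (fun w : ℂ => g (x₀ + w • v)) (fderiv ℂ g x₀ v) 0 := by
  have hv0 : 0 < ‖v‖ := norm_pos_iff.2 hv
  constructor
  · intro w hw
    simp only [mem_closedBall, dist_zero_right] at hw
    have hmem : x₀ + w • v ∈ ball x₀ δ := by
      simp only [mem_ball, dist_self_add_left, norm_smul]
      calc ‖w‖ * ‖v‖ ≤ δ / (2 * ‖v‖) * ‖v‖ := by
            exact mul_le_mul_of_nonneg_right hw hv0.le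
        _ = δ / 2 := by field_simp
        _ < δ := by linarith
    have hline : DifferentiableAt ℂ (fun w : ℂ => x₀ + w • v) w := by
      apply DifferentiableAt.const_add
      exact (differentiableAt_id).smul_const v
    exact ((hg _ hmem).comp w hline).differentiableWithinAt
  · have hline : HasDerivAt (fun w : ℂ => x₀ + w • v) v 0 := by
      have h1 : HasDerivAt (fun w : ℂ => w • v) ((1:ℂ) • v) 0 := (hasDerivAt_id 0).smul_const v
      simpa using h1.const_add x₀
    have hgd : HasFDerivAt g (fderiv ℂ g x₀) x₀ :=
      (hg x₀ (mem_ball_self hδ)).hasFDerivAt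
    have hgd' : HasFDerivAt g (fderiv ℂ g x₀) (x₀ + (0:ℂ) • v) := by simpa using hgd
    simpa [Function.comp_def] using hgd'.comp_hasDerivAt 0 hline

/-- Cauchy bound for the directional derivative. -/
lemma dir_deriv_bound {g : E → ℂ} {x₀ : E} {δ M : ℝ} (hδ : 0 < δ)
    (hg : ∀ x ∈ ball x₀ δ, DifferentiableAt ℂ g x)
    (hM : ∀ x ∈ ball x₀ δ, ‖g x‖ ≤ M) (v : E) :
    ‖fderiv ℂ g x₀ v‖ ≤ 2 * M / δ * ‖v‖ := by
  have hM0 : 0 ≤ M := le_trans (norm_nonneg _) (hM x₀ (mem_ball_self hδ))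
  rcases eq_or_ne v 0 with rfl | hv
  · simp [hM0]
  have hv0 : 0 < ‖v‖ := norm_pos_iff.2 hv
  obtain ⟨hdiff, hder⟩ := line_restrict hδ hg v hv
  set r := δ / (2 * ‖v‖) with hrdef
  have hr : 0 < r := by positivity
  have hMφ : ∀ z ∈ closedBall (0:ℂ) r, ‖g (x₀ + z • v)‖ ≤ M := by
    intro z hz
    simp only [mem_closedBall, dist_zero_right] at hz
    apply hM
    simp only [mem_ball, dist_self_add_left, norm_smul]
    calc ‖z‖ * ‖v‖ ≤ r * ‖v‖ := mul_le_mul_of_nonneg_right hz hv0.le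
      _ = δ / 2 := by rw [hrdef]; field_simp
      _ < δ := by linarith
  have := cauchy_deriv_bound hr hdiff hMφ
  rw [hder.deriv] at this
  calc ‖fderiv ℂ g x₀ v‖ ≤ M / r := this
    _ = 2 * M / δ * ‖v‖ := by rw [hrdef]; field_simp

/-- Second-order Taylor bound in a given direction. -/
lemma dir_taylor_bound {g : E → ℂ} {x₀ : E} {δ M : ℝ} (hδ : 0 < δ)
    (hg : ∀ x ∈ ball x₀ δ, DifferentiableAt ℂ g x)
    (hM : ∀ x ∈ ball x₀ δ, ‖g x‖ ≤ M) {v : E} (hv : ‖v‖ ≤ δ / 4) :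
    ‖g (x₀ + v) - g x₀ - fderiv ℂ g x₀ v‖ ≤ 8 * M * ‖v‖ ^ 2 / δ ^ 2 := by
  have hM0 : 0 ≤ M := le_trans (norm_nonneg _) (hM x₀ (mem_ball_self hδ))
  rcases eq_or_ne v 0 with rfl | hv0
  · simp [hM0]
  have hvn : 0 < ‖v‖ := norm_pos_iff.2 hv0
  obtain ⟨hdiff, hder⟩ := line_restrict hδ hg v hv0
  set r := δ / (2 * ‖v‖) with hrdef
  have hr : 0 < r := by positivity
  have hMφ : ∀ z ∈ closedBall (0:ℂ) r, ‖g (x₀ + z • v)‖ ≤ M := by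
    intro z hz
    simp only [mem_closedBall, dist_zero_right] at hz
    apply hM
    simp only [mem_ball, dist_self_add_left, norm_smul]
    calc ‖z‖ * ‖v‖ ≤ r * ‖v‖ := mul_le_mul_of_nonneg_right hz hvn.le
      _ = δ / 2 := by rw [hrdef]; field_simp
      _ < δ := by linarith
  have hw1 : ‖(1:ℂ)‖ ≤ r / 2 := by
    rw [norm_one, hrdef, le_div_iff₀ (by norm_num : (0:ℝ) < 2), one_mul,
      le_div_iff₀ (by positivity : (0:ℝ) < 2 * ‖v‖)]
    linarith
  have hb := cauchy_taylor_bound hr hdiff hMφ hw1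
  have he1 : (1:ℂ) • v = v := one_smul _ _
  have he0 : (0:ℂ) • v = 0 := zero_smul _ _
  rw [hder.deriv] at hb
  simp only [he1, he0, add_zero, one_mul, norm_one] at hb
  calc ‖g (x₀ + v) - g x₀ - fderiv ℂ g x₀ v‖ ≤ 2 * M * 1 ^ 2 / r ^ 2 := hb
    _ = 8 * M * ‖v‖ ^ 2 / δ ^ 2 := by
        rw [hrdef]
        rw [div_pow]
        rw [div_div_eq_mul_div]
        rw [mul_pow]
        field_simp
        ring

end Directional

section Param

variable {E : Type*} [NormedAddCommGroup E] [NormedSpace ℂ E]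

open Asymptotics

set_option maxHeartbeats 1000000 in
lemma differentiableAt_param_integral {Φ : E → ℝ → ℂ} {x₀ : E} {δ M : ℝ} (hδ : 0 < δ)
    (hdiff : ∀ t ∈ Icc (0:ℝ) 1, ∀ x ∈ ball x₀ δ, DifferentiableAt ℂ (fun u => Φ u t) x)
    (hcont : ∀ x ∈ ball x₀ δ, ContinuousOn (fun t => Φ x t) (Icc (0:ℝ) 1))
    (hM : ∀ t ∈ Icc (0:ℝ) 1, ∀ x ∈ ball x₀ δ, ‖Φ x t‖ ≤ M) :
    DifferentiableAt ℂ (fun u => ∫ t in (0:ℝ)..1, Φ u t) x₀ := by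
  have hM0 : 0 ≤ M := le_trans (norm_nonneg _) (hM 0 ⟨le_refl 0, zero_le_one⟩ x₀ (mem_ball_self hδ))
  set d : E → ℝ → ℂ := fun v t => fderiv ℂ (fun u => Φ u t) x₀ v with hd
  -- integrability of Φ x
  have hIΦ : ∀ x ∈ ball x₀ δ, IntervalIntegrable (fun t => Φ x t) volume 0 1 := by
    intro x hx
    apply ContinuousOn.intervalIntegrable
    rw [uIcc_of_le zero_le_one]
    exact hcont x hx
  -- pointwise bound for d
  have hdb : ∀ v, ∀ t ∈ Icc (0:ℝ) 1, ‖d v t‖ ≤ 2 * M / δ * ‖v‖ := by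
    intro v t ht
    exact dir_deriv_bound hδ (hdiff t ht) (fun x hx => hM t ht x hx) v
  -- integrability of d v
  have key : ∀ v : E, IntervalIntegrable (fun t => d v t) volume 0 1 := by
    intro v
    rcases eq_or_ne v 0 with rfl | hv
    · have : (fun t => d 0 t) = fun _ => (0:ℂ) := by
        funext t
        simp [hd]
      rw [this]
      exact intervalIntegrable_const
    have hv0 : 0 < ‖v‖ := norm_pos_iff.2 hv
    set c₀ : ℝ := δ / (2 * (‖v‖ + 1)) with hc₀
    have hc₀pos : 0 < c₀ := by positivity
    set w : ℕ → ℂ := fun n => ((c₀ / (n + 1) : ℝ) : ℂ) with hw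
    have hwpos : ∀ n : ℕ, (0:ℝ) < c₀ / ((n:ℝ) + 1) := by
      intro n
      have h1 : (0:ℝ) < (n:ℝ) + 1 := by positivity
      positivity
    have hwne : ∀ n, w n ≠ 0 := by
      intro n
      simp only [hw, ne_eq, Complex.ofReal_eq_zero]
      exact (hwpos n).ne'
    have hwball : ∀ n, x₀ + w n • v ∈ ball x₀ δ := by
      intro n
      simp only [mem_ball, dist_self_add_left, norm_smul]
      have h1 : ‖w n‖ = c₀ / (n + 1) := by
        rw [hw]
        simp only [Complex.norm_real]
        exact abs_of_pos (hwpos n)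
      rw [h1]
      have h2 : c₀ / (n + 1) ≤ c₀ := by
        apply div_le_self hc₀pos.le
        simp
      calc c₀ / (↑n + 1) * ‖v‖ ≤ c₀ * ‖v‖ := mul_le_mul_of_nonneg_right h2 hv0.le
        _ = δ * ‖v‖ / (2 * (‖v‖ + 1)) := by rw [hc₀]; ring
        _ < δ := by
            rw [div_lt_iff₀ (by positivity)]
            nlinarith
    -- the approximants
    set A : ℕ → ℝ → ℂ := fun n t => (Φ (x₀ + w n • v) t - Φ x₀ t) / w n with hA
    have hAmeas : ∀ n, AEStronglyMeasurable (A n) (volume.restrict (Icc (0:ℝ) 1)) := by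
      intro n
      apply ContinuousOn.aestronglyMeasurable _ measurableSet_Icc
      exact (((hcont _ (hwball n)).sub (hcont _ (mem_ball_self hδ))).div_const _)
    have hAtendsto : ∀ t ∈ Icc (0:ℝ) 1,
        Filter.Tendsto (fun n => A n t) Filter.atTop (nhds (d v t)) := by
      intro t ht
      have hder := (line_restrict hδ (hdiff t ht) v hv).2
      have hslope := hasDerivAt_iff_tendsto_slope.1 hder
      have hseq : Filter.Tendsto w Filter.atTop (nhdsWithin 0 {(0:ℂ)}ᶜ) := by
        rw [tendsto_nhdsWithin_iff]
        constructor
        · rw [hw]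
          have h3 : Filter.Tendsto (fun n : ℕ => c₀ / ((n:ℝ) + 1)) Filter.atTop (nhds 0) := by
            have h5 := tendsto_one_div_add_atTop_nhds_zero_nat.const_mul c₀
            rw [mul_zero] at h5
            convert h5 using 2 with n
            rw [mul_one_div]
          have h4 : Filter.Tendsto (fun n : ℕ => ((c₀ / ((n:ℝ) + 1) : ℝ) : ℂ))
              Filter.atTop (nhds ((0:ℝ) : ℂ)) :=
            (Complex.continuous_ofReal.tendsto (0:ℝ)).comp h3
          simpa using h4
        · exact Filter.Eventually.of_forall fun n => hwne n
      have := hslope.comp hseq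
      have heq : (fun n => slope (fun z : ℂ => Φ (x₀ + z • v) t) 0 (w n)) = fun n => A n t := by
        funext n
        rw [slope_def_field]
        simp [hA]
      rw [← heq]
      exact this
    have hdmeas : AEStronglyMeasurable (fun t => d v t) (volume.restrict (Icc (0:ℝ) 1)) := by
      apply aestronglyMeasurable_of_tendsto_ae Filter.atTop hAmeas
      rw [ae_restrict_iff' measurableSet_Icc]
      exact Filter.Eventually.of_forall fun t ht => hAtendsto t ht
    have hdint : IntegrableOn (fun t => d v t) (Icc (0:ℝ) 1) volume := by
      apply Integrable.mono' (g := fun _ : ℝ => 2 * M / δ * ‖v‖)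
        (integrableOn_const measure_Icc_lt_top.ne) hdmeas
      rw [ae_restrict_iff' measurableSet_Icc]
      exact Filter.Eventually.of_forall fun t ht => hdb v t ht
    have : IntegrableOn (fun t => d v t) (uIcc (0:ℝ) 1) volume := by
      rwa [uIcc_of_le zero_le_one]
    exact this.intervalIntegrable
  -- the candidate derivative
  set L₀ : E →ₗ[ℂ] ℂ :=
    { toFun := fun v => ∫ t in (0:ℝ)..1, d v t
      map_add' := by
        intro v v'
        have hh : (fun t => d (v + v') t) = fun t => d v t + d v' t := by
          funext t
          simp [hd]
        show (∫ t in (0:ℝ)..1, d (v + v') t)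
            = (∫ t in (0:ℝ)..1, d v t) + ∫ t in (0:ℝ)..1, d v' t
        rw [hh, intervalIntegral.integral_add (key v) (key v')]
      map_smul' := by
        intro s v
        have hh : (fun t => d (s • v) t) = fun t => s • d v t := by
          funext t
          simp [hd]
        show (∫ t in (0:ℝ)..1, d (s • v) t) = s • ∫ t in (0:ℝ)..1, d v t
        rw [hh, intervalIntegral.integral_smul] } with hL₀
  have hL₀b : ∀ v, ‖L₀ v‖ ≤ 2 * M / δ * ‖v‖ := by
    intro v
    have := intervalIntegral.norm_integral_le_of_norm_le_const
      (C := 2 * M / δ * ‖v‖) (f := fun t => d v t) (a := 0) (b := 1) ?_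
    · show ‖∫ t in (0:ℝ)..1, d v t‖ ≤ _
      simpa using this
    · intro t ht
      rw [uIoc_of_le zero_le_one] at ht
      exact hdb v t ⟨ht.1.le, ht.2⟩
  set L : E →L[ℂ] ℂ := L₀.mkContinuous (2 * M / δ) hL₀b with hL
  have hfd : HasFDerivAt (fun u => ∫ t in (0:ℝ)..1, Φ u t) L x₀ := by
    rw [hasFDerivAt_iff_isLittleO_nhds_zero]
    have h1 : (fun v => (∫ t in (0:ℝ)..1, Φ (x₀ + v) t) - (∫ t in (0:ℝ)..1, Φ x₀ t) - L v)
        =O[nhds 0] fun v : E => ‖v‖ * ‖v‖ := by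
      rw [isBigO_iff]
      refine ⟨8 * M / δ ^ 2, ?_⟩
      filter_upwards [Metric.ball_mem_nhds (0:E) (by positivity : (0:ℝ) < δ/4)] with v hv
      rw [mem_ball_zero_iff] at hv
      have hxv : x₀ + v ∈ ball x₀ δ := by
        simp only [mem_ball, dist_self_add_left]
        linarith
      have hLv : L v = ∫ t in (0:ℝ)..1, d v t := rfl
      have heq : (∫ t in (0:ℝ)..1, Φ (x₀ + v) t) - (∫ t in (0:ℝ)..1, Φ x₀ t) - L v
          = ∫ t in (0:ℝ)..1, (Φ (x₀ + v) t - Φ x₀ t - d v t) := by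
        rw [hLv, ← intervalIntegral.integral_sub (hIΦ _ hxv) (hIΦ _ (mem_ball_self hδ)),
          ← intervalIntegral.integral_sub ((hIΦ _ hxv).sub (hIΦ _ (mem_ball_self hδ))) (key v)]
      rw [heq]
      have hbd := intervalIntegral.norm_integral_le_of_norm_le_const
        (C := 8 * M * ‖v‖ ^ 2 / δ ^ 2) (f := fun t => Φ (x₀ + v) t - Φ x₀ t - d v t)
        (a := 0) (b := 1) ?_
      · calc ‖∫ t in (0:ℝ)..1, (Φ (x₀ + v) t - Φ x₀ t - d v t)‖
            ≤ 8 * M * ‖v‖ ^ 2 / δ ^ 2 * |1 - 0| := hbd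
          _ = 8 * M / δ ^ 2 * ‖‖v‖ * ‖v‖‖ := by
              rw [_root_.abs_of_nonneg (by norm_num : (0:ℝ) ≤ 1 - 0)]
              rw [Real.norm_eq_abs, _root_.abs_of_nonneg (by positivity : (0:ℝ) ≤ ‖v‖ * ‖v‖)]
              ring
      · intro t ht
        rw [uIoc_of_le zero_le_one] at ht
        exact dir_taylor_bound hδ (hdiff t ⟨ht.1.le, ht.2⟩)
          (fun x hx => hM t ⟨ht.1.le, ht.2⟩ x hx) hv.le
    have h2 : (fun v : E => ‖v‖ * ‖v‖) =o[nhds 0] fun v : E => v := by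
      rw [isLittleO_iff]
      intro C hC
      filter_upwards [Metric.ball_mem_nhds (0:E) hC] with v hv
      rw [mem_ball_zero_iff] at hv
      rw [Real.norm_eq_abs, _root_.abs_of_nonneg (by positivity : (0:ℝ) ≤ ‖v‖ * ‖v‖)]
      exact mul_le_mul_of_nonneg_right hv.le (norm_nonneg v)
    exact h1.trans_isLittleO h2
  exact hfd.differentiableAt

end Param

section Primitive

set_option maxHeartbeats 2000000 in
lemma primitive_hasDerivAt {f : ℂ → ℂ} {c : ℂ} {R : ℝ}
    (hf : DifferentiableOn ℂ f (ball c R)) {z₀ : ℂ} (hz₀ : z₀ ∈ ball c R) :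
    HasDerivAt (fun z => pathIntegral f c z) (f z₀) z₀ := by
  have hfa : AnalyticOnNhd ℂ f (ball c R) := hf.analyticOnNhd isOpen_ball
  have hdc : ContinuousOn (deriv f) (ball c R) :=
    hfa.deriv.differentiableOn.continuousOn
  have hfc : ContinuousOn f (ball c R) := hf.continuousOn
  rw [mem_ball] at hz₀
  set ε : ℝ := (R - dist z₀ c) / 2 with hε
  have hεpos : 0 < ε := by simp only [hε]; linarith
  set r' : ℝ := dist z₀ c + ε with hr'def
  have hr'R : r' < R := by simp only [hr'def, hε]; linarith
  have hr'0 : 0 ≤ r' := by positivity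
  have hKsub : closedBall c r' ⊆ ball c R := closedBall_subset_ball hr'R
  obtain ⟨Mf, hMf⟩ := (isCompact_closedBall c r').exists_bound_of_continuousOn
    (hfc.mono hKsub)
  obtain ⟨Mf', hMf'⟩ := (isCompact_closedBall c r').exists_bound_of_continuousOn
    (hdc.mono hKsub)
  set F : ℂ → ℝ → ℂ := fun z t => (z - c) * f (c + (t:ℂ) * (z - c)) with hF
  set F' : ℂ → ℝ → ℂ :=
    fun z t => f (c + (t:ℂ) * (z - c)) + (t:ℂ) * (z - c) * deriv f (c + (t:ℂ) * (z - c))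
    with hF'
  -- membership of the segment points
  have hmem : ∀ x ∈ ball z₀ ε, ∀ t ∈ Icc (0:ℝ) 1, c + (t:ℂ) * (x - c) ∈ closedBall c r' := by
    intro x hx t ht
    rw [mem_ball] at hx
    rw [mem_closedBall]
    have h1 : dist (c + (t:ℂ) * (x - c)) c = t * dist x c := by
      rw [dist_comm x c]
      simp only [dist_eq_norm]
      rw [add_sub_cancel_left]
      rw [norm_mul, Complex.norm_real, Real.norm_eq_abs]
      · rw [_root_.abs_of_nonneg ht.1]
        congr 1
        rw [norm_sub_rev]
      
    rw [h1]
    have h2 : dist x c ≤ r' := by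
      calc dist x c ≤ dist x z₀ + dist z₀ c := dist_triangle _ _ _
        _ ≤ r' := by simp only [hr'def]; linarith
    calc t * dist x c ≤ 1 * r' := by
          apply mul_le_mul ht.2 h2 dist_nonneg zero_le_one
      _ = r' := one_mul r'
  have hxmem : ∀ x ∈ ball z₀ ε, x ∈ closedBall c r' := by
    intro x hx
    rw [mem_ball] at hx
    rw [mem_closedBall]
    calc dist x c ≤ dist x z₀ + dist z₀ c := dist_triangle _ _ _
      _ ≤ r' := by simp only [hr'def]; linarith
  -- continuity of F x in t
  have hFcont : ∀ x ∈ ball z₀ ε, ContinuousOn (fun t : ℝ => F x t) (Icc 0 1) := by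
    intro x hx
    apply ContinuousOn.mul continuousOn_const
    apply (hfc.mono hKsub).comp
    · apply Continuous.continuousOn
      continuity
    · intro t ht
      exact hmem x hx t ht
  have hF'cont : ContinuousOn (fun t : ℝ => F' z₀ t) (Icc 0 1) := by
    have hz₀' : z₀ ∈ ball z₀ ε := mem_ball_self hεpos
    have hc1 : ContinuousOn (fun t : ℝ => (c + (t:ℂ) * (z₀ - c))) (Icc 0 1) := by
      apply Continuous.continuousOn; continuity
    apply ContinuousOn.add
    · exact (hfc.mono hKsub).comp hc1 (fun t ht => hmem z₀ hz₀' t ht)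
    · apply ContinuousOn.mul
      · apply Continuous.continuousOn; continuity
      · exact (hdc.mono hKsub).comp hc1 (fun t ht => hmem z₀ hz₀' t ht)
  have hMf0 : 0 ≤ Mf := le_trans (norm_nonneg _) (hMf c (mem_closedBall_self hr'0))
  have hMf'0 : 0 ≤ Mf' := le_trans (norm_nonneg _) (hMf' c (mem_closedBall_self hr'0))
  have key := intervalIntegral.hasDerivAt_integral_of_dominated_loc_of_deriv_le
    (F := F) (F' := F') (x₀ := z₀) (a := 0) (b := 1) (μ := volume)
    (bound := fun _ => Mf + r' * Mf') (ball_mem_nhds z₀ hεpos) ?_ ?_ ?_ ?_ ?_ ?_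
  · obtain ⟨hint, hder⟩ := key
    have hval : (∫ t in (0:ℝ)..1, F' z₀ t) = f z₀ := by
      have hFTC := intervalIntegral.integral_eq_sub_of_hasDerivAt
        (f := fun s : ℝ => (s:ℂ) * f (c + (s:ℂ) * (z₀ - c)))
        (f' := fun t => F' z₀ t) (a := 0) (b := 1) ?_ hint
      · rw [hFTC]
        norm_num
      · intro t ht
        rw [uIcc_of_le zero_le_one] at ht
        have hptmem : c + (t:ℂ) * (z₀ - c) ∈ ball c R :=
          hKsub (hmem z₀ (mem_ball_self hεpos) t ht)
        have h5 : HasDerivAt (fun τ : ℂ => c + τ * (z₀ - c)) (z₀ - c) (t:ℂ) := by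
          have := ((hasDerivAt_id (t:ℂ)).mul_const (z₀ - c)).const_add c
          simpa using this
        have h6 : HasDerivAt f (deriv f (c + (t:ℂ) * (z₀ - c))) (c + (t:ℂ) * (z₀ - c)) :=
          (hf.differentiableAt (isOpen_ball.mem_nhds hptmem)).hasDerivAt
        have h7 := h6.comp (t:ℂ) h5
        have h8 := (hasDerivAt_id (t:ℂ)).mul h7
        have h9 : HasDerivAt (fun τ : ℂ => τ * f (c + τ * (z₀ - c)))
            (F' z₀ t) (t:ℂ) := by
          exact h8.congr_deriv (by simp only [hF', Function.comp_apply, id]; ring)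
        exact h9.comp_ofReal
    rw [hval] at hder
    exact hder
  · filter_upwards [ball_mem_nhds z₀ hεpos] with x hx
    apply ContinuousOn.aestronglyMeasurable _ measurableSet_uIoc
    rw [uIoc_of_le zero_le_one]
    exact (hFcont x hx).mono Ioc_subset_Icc_self
  · apply ContinuousOn.intervalIntegrable
    rw [uIcc_of_le zero_le_one]
    exact hFcont z₀ (mem_ball_self hεpos)
  · apply ContinuousOn.aestronglyMeasurable _ measurableSet_uIoc
    rw [uIoc_of_le zero_le_one]
    exact hF'cont.mono Ioc_subset_Icc_self
  · apply Filter.Eventually.of_forall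
    intro t ht x hx
    rw [uIoc_of_le zero_le_one] at ht
    have ht' : t ∈ Icc (0:ℝ) 1 := ⟨ht.1.le, ht.2⟩
    have hℓ := hmem x hx t ht'
    have h1 : ‖f (c + (t:ℂ) * (x - c))‖ ≤ Mf := hMf _ hℓ
    have h2 : ‖deriv f (c + (t:ℂ) * (x - c))‖ ≤ Mf' := hMf' _ hℓ
    have h3 : ‖(t:ℂ) * (x - c)‖ ≤ r' := by
      rw [norm_mul, Complex.norm_real, Real.norm_eq_abs, _root_.abs_of_nonneg ht'.1]
      have h4 : ‖x - c‖ = dist x c := by rw [dist_eq_norm]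
      rw [h4]
      have h5 : dist x c ≤ r' := by
        have h6 := hxmem x hx
        rwa [mem_closedBall] at h6
      calc t * dist x c ≤ 1 * r' :=
            mul_le_mul ht'.2 h5 dist_nonneg zero_le_one
        _ = r' := one_mul _
    calc ‖F' x t‖ ≤ ‖f (c + (t:ℂ) * (x - c))‖ + ‖(t:ℂ) * (x - c) * deriv f (c + (t:ℂ) * (x - c))‖ :=
          norm_add_le _ _
      _ ≤ Mf + r' * Mf' := by
          apply add_le_add h1
          rw [norm_mul]
          exact mul_le_mul h3 h2 (norm_nonneg _) hr'0
  · exact intervalIntegrable_const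
  · apply Filter.Eventually.of_forall
    intro t ht x hx
    rw [uIoc_of_le zero_le_one] at ht
    have ht' : t ∈ Icc (0:ℝ) 1 := ⟨ht.1.le, ht.2⟩
    have hptmem : c + (t:ℂ) * (x - c) ∈ ball c R := hKsub (hmem x hx t ht')
    have h1 : HasDerivAt (fun z : ℂ => c + (t:ℂ) * (z - c)) (t:ℂ) x := by
      have := (((hasDerivAt_id x).sub_const c).const_mul (t:ℂ)).const_add c
      simpa using this
    have h2 : HasDerivAt f (deriv f (c + (t:ℂ) * (x - c))) (c + (t:ℂ) * (x - c)) :=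
      (hf.differentiableAt (isOpen_ball.mem_nhds hptmem)).hasDerivAt
    have h3 := h2.comp x h1
    have h4 : HasDerivAt (fun z : ℂ => z - c) 1 x := (hasDerivAt_id x).sub_const c
    have h5 := h4.mul h3
    exact h5.congr_deriv (by simp only [hF', Function.comp_apply, id]; ring)

end Primitive

set_option maxHeartbeats 1000000 in
lemma pathIntegral_eq_sub {f : ℂ → ℂ} {c : ℂ} {R : ℝ}
    (hf : DifferentiableOn ℂ f (ball c R)) {x y : ℂ}
    (hx : x ∈ ball c R) (hy : y ∈ ball c R) :
    pathIntegral f x y = pathIntegral f c y - pathIntegral f c x := by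
  have hseg : ∀ t ∈ Icc (0:ℝ) 1, x + (t:ℂ) * (y - x) ∈ ball c R := by
    intro t ht
    have h1 : x + (t:ℂ) * (y - x) = (1 - t) • x + t • y := by
      simp only [Complex.real_smul]
      push_cast
      ring
    rw [h1]
    exact (convex_ball c R) hx hy (by linarith [ht.2]) ht.1 (by ring)
  have hder : ∀ t ∈ uIcc (0:ℝ) 1,
      HasDerivAt (fun s : ℝ => pathIntegral f c (x + (s:ℂ) * (y - x)))
        ((y - x) * f (x + (t:ℂ) * (y - x))) t := by
    intro t ht
    rw [uIcc_of_le zero_le_one] at ht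
    have hline : HasDerivAt (fun τ : ℂ => x + τ * (y - x)) (y - x) (t:ℂ) := by
      have := ((hasDerivAt_id (t:ℂ)).mul_const (y - x)).const_add x
      simpa using this
    have hg := primitive_hasDerivAt hf (hseg t ht)
    have h2 := hg.comp (t:ℂ) hline
    have h3 : HasDerivAt (fun τ : ℂ => pathIntegral f c (x + τ * (y - x)))
        ((y - x) * f (x + (t:ℂ) * (y - x))) (t:ℂ) := by
      exact h2.congr_deriv (by ring)
    exact h3.comp_ofReal
  have hcontInt : IntervalIntegrable
      (fun t : ℝ => (y - x) * f (x + (t:ℂ) * (y - x))) volume 0 1 := by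
    apply ContinuousOn.intervalIntegrable
    rw [uIcc_of_le zero_le_one]
    apply ContinuousOn.mul continuousOn_const
    apply hf.continuousOn.comp
    · apply Continuous.continuousOn; continuity
    · intro t ht
      exact hseg t ht
  have hFTC := intervalIntegral.integral_eq_sub_of_hasDerivAt hder hcontInt
  have hL : pathIntegral f x y = ∫ t in (0:ℝ)..1, (y - x) * f (x + (t:ℂ) * (y - x)) := rfl
  rw [hL, hFTC]
  norm_num [pathIntegral]

section PartB

lemma gamma_basis (N : ℕ) (i : Fin N) :
    ∃ b : Module.Basis {j : Fin N // j ≠ i} ℂ (Module.Dual ℂ (RelH1 N)),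
      ∀ j : {j : Fin N // j ≠ i}, b j = gammaIJ N i (j : Fin N) := by
  set φ : (Fin N → ℂ) →ₗ[ℂ] ({j : Fin N // j ≠ i} → ℂ) :=
    LinearMap.pi (fun j => (LinearMap.proj (j : Fin N) : (Fin N → ℂ) →ₗ[ℂ] ℂ)
      - LinearMap.proj i) with hφ
  have hφapp : ∀ (x : Fin N → ℂ) (j : {j : Fin N // j ≠ i}), φ x j = x j - x i := by
    intro x j
    simp [hφ, LinearMap.pi_apply]
  have hker₁ : constantsSubmodule N ≤ LinearMap.ker φ := by
    rw [constantsSubmodule, Submodule.span_le, Set.singleton_subset_iff, SetLike.mem_coe,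
      LinearMap.mem_ker]
    funext j
    simp [hφapp]
  have hker₂ : LinearMap.ker φ ≤ constantsSubmodule N := by
    intro x hx
    rw [LinearMap.mem_ker] at hx
    rw [constantsSubmodule, Submodule.mem_span_singleton]
    refine ⟨x i, ?_⟩
    funext l
    rcases eq_or_ne l i with rfl | hl
    · simp
    · have := congrFun hx ⟨l, hl⟩
      rw [hφapp] at this
      simp only [Pi.zero_apply] at this
      simp only [Pi.smul_apply, smul_eq_mul, mul_one]
      linear_combination -this
  set e₀ := (constantsSubmodule N).liftQ φ hker₁ with he₀
  have hinj : LinearMap.ker e₀ = ⊥ := Submodule.ker_liftQ_eq_bot _ _ _ hker₂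
  have hsurj : LinearMap.range e₀ = ⊤ := by
    rw [he₀, Submodule.range_liftQ]
    rw [LinearMap.range_eq_top]
    intro y
    refine ⟨fun l => if h : l = i then 0 else y ⟨l, h⟩, ?_⟩
    funext j
    rw [hφapp]
    rw [dif_neg j.2, dif_pos rfl, sub_zero]
  set e : RelH1 N ≃ₗ[ℂ] ({j : Fin N // j ≠ i} → ℂ) :=
    LinearEquiv.ofBijective e₀
      ⟨LinearMap.ker_eq_bot.1 hinj, LinearMap.range_eq_top.1 hsurj⟩ with he
  refine ⟨((Pi.basisFun ℂ {j : Fin N // j ≠ i}).dualBasis.map e.dualMap), ?_⟩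
  intro j
  apply LinearMap.ext
  intro q
  obtain ⟨x, rfl⟩ := Submodule.Quotient.mk_surjective _ q
  rw [Module.Basis.map_apply, LinearEquiv.dualMap_apply, Module.Basis.coe_dualBasis, Module.Basis.coord_apply,
    Pi.basisFun_repr]
  have h1 : e (Submodule.Quotient.mk x) = φ x := rfl
  rw [h1, hφapp]
  have h2 : gammaIJ N i (j : Fin N) (Submodule.Quotient.mk x) = x j - x i := by
    rw [gammaIJ]
    rw [Submodule.liftQ_apply]
    simp
  rw [h2]

end PartB


set_option maxHeartbeats 2000000 in
/-- **Lemma (periods of a family of Abelian differentials on a disc).**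
Let `D = B(c,R) ⊂ ℂ` be an open disc, `U` a contractible complex manifold (here an open
contractible subset of a complex normed space `E`), `m_1,…,m_N ≥ 0` integers,
`p_1,…,p_N : U → D` holomorphic maps and `a : U×D → ℂ^*` holomorphic and nonvanishing;
consider the family of Abelian differentials
`α_u := a(u,z)(z-p_1(u))^{m_1}⋯(z-p_N(u))^{m_N} dz` on `D`.  Then:
(a) for every `i,j`, the function `u ↦ ∫_{p_i(u)}^{p_j(u)} α_u` is holomorphic on `U`;
(b) for every `i` (and every `u`), the functionals `{γ_{ij} : j ≠ i}` form a basis of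
the dual of `𝐇¹(ℂ_{D,P})_u ≅ ℂ^N/ℂ`;
(c) the assignment `u ↦ (Σ_j c_j γ_{ij} ↦ Σ_j c_j ∫_{γ_{ij}} α_u)` determines a
holomorphic section of the ℂ-local system `𝐇¹(ℂ_{D,P})` over `U`: there is a
holomorphic lift `F : U → ℂ^N` whose class pairs with every `γ_{ij}` to the period
`∫_{p_i(u)}^{p_j(u)} α_u`. -/
theorem periods_of_abelian_differentials_on_disc
    (E : Type*) [NormedAddCommGroup E] [NormedSpace ℂ E]
    (U : Set E) (hUopen : IsOpen U) (hUcontr : ContractibleSpace U)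
    (c : ℂ) (R : ℝ) (hR : 0 < R)
    (N : ℕ) (hN : 0 < N) (m : Fin N → ℕ)
    (p : Fin N → E → ℂ)
    (hp : ∀ i, DifferentiableOn ℂ (p i) U)
    (hpD : ∀ i, ∀ u ∈ U, p i u ∈ Metric.ball c R)
    (a : E → ℂ → ℂ)
    (ha : DifferentiableOn ℂ (fun q : E × ℂ => a q.1 q.2) (U ×ˢ Metric.ball c R))
    (ha0 : ∀ u ∈ U, ∀ z ∈ Metric.ball c R, a u z ≠ 0) :
    -- (a)
    (∀ i j : Fin N,
      DifferentiableOn ℂ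
        (fun u => pathIntegral
          (fun z => a u z * ∏ l, (z - p l u) ^ (m l)) (p i u) (p j u)) U) ∧
    -- (b)
    (∀ i : Fin N,
      ∃ b : Module.Basis {j : Fin N // j ≠ i} ℂ (Module.Dual ℂ (RelH1 N)),
        ∀ j : {j : Fin N // j ≠ i}, b j = gammaIJ N i (j : Fin N)) ∧
    -- (c)
    (∃ F : E → (Fin N → ℂ),
      DifferentiableOn ℂ F U ∧
      ∀ u ∈ U, ∀ i j : Fin N,
        gammaIJ N i j (Submodule.Quotient.mk (F u)) =
          pathIntegral (fun z => a u z * ∏ l, (z - p l u) ^ (m l))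
            (p i u) (p j u)) := by
  classical
  set g : E × ℂ → ℂ := fun q => a q.1 q.2 * ∏ l, (q.2 - p l q.1) ^ (m l) with hg
  have hgdiff : DifferentiableOn ℂ g (U ×ˢ Metric.ball c R) := by
    apply ha.mul
    have hind : ∀ s : Finset (Fin N), DifferentiableOn ℂ
        (fun q : E × ℂ => ∏ l ∈ s, (q.2 - p l q.1) ^ m l) (U ×ˢ Metric.ball c R) := by
      intro s
      induction s using Finset.induction with
      | empty =>
          simp only [Finset.prod_empty]
          exact differentiableOn_const 1
      | insert l s' hnotmem ih =>
          have heq : (fun q : E × ℂ => ∏ l' ∈ insert l s', (q.2 - p l' q.1) ^ m l')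
              = fun q : E × ℂ => (q.2 - p l q.1) ^ m l * ∏ l' ∈ s', (q.2 - p l' q.1) ^ m l' := by
            funext q
            rw [Finset.prod_insert hnotmem]
          rw [heq]
          apply DifferentiableOn.mul _ ih
          apply DifferentiableOn.pow
          apply DifferentiableOn.sub differentiable_snd.differentiableOn
          exact (hp l).comp differentiable_fst.differentiableOn (fun q hq => hq.1)
    exact hind Finset.univ
  have hgcont : ContinuousOn g (U ×ˢ Metric.ball c R) := hgdiff.continuousOn
  have hfu : ∀ u ∈ U, DifferentiableOn ℂ
      (fun z => a u z * ∏ l, (z - p l u) ^ (m l)) (Metric.ball c R) := by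
    intro u hu
    have heq : (fun z => a u z * ∏ l, (z - p l u) ^ (m l)) = fun z => g (u, z) := rfl
    rw [heq]
    apply hgdiff.comp ((differentiable_const u).prodMk differentiable_id).differentiableOn
    intro z hz
    exact ⟨hu, hz⟩
  set F : E → Fin N → ℂ :=
    fun u j => pathIntegral (fun z => a u z * ∏ l, (z - p l u) ^ (m l)) c (p j u) with hF
  -- key differentiability of each coordinate of F
  have hFj : ∀ j, DifferentiableOn ℂ (fun u => F u j) U := by
    intro j x₀ hx₀
    apply DifferentiableAt.differentiableWithinAt
    set ℓfun : E × ℝ → ℂ := fun w => c + (w.2 : ℂ) * (p j w.1 - c) with hℓ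
    have hℓcont : ContinuousOn ℓfun (U ×ˢ (univ : Set ℝ)) := by
      apply ContinuousOn.add continuousOn_const
      apply ContinuousOn.mul
      · exact (Complex.continuous_ofReal.comp continuous_snd).continuousOn
      · exact ContinuousOn.sub
          ((hp j).continuousOn.comp continuous_fst.continuousOn (fun w hw => hw.1))
          continuousOn_const
    set O : Set (E × ℝ) := (U ×ˢ (univ : Set ℝ)) ∩ ℓfun ⁻¹' (Metric.ball c R) with hO
    have hOopen : IsOpen O :=
      hℓcont.isOpen_inter_preimage (hUopen.prod isOpen_univ) Metric.isOpen_ball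
    have hOU : ∀ w ∈ O, w.1 ∈ U := fun w hw => hw.1.1
    have hOB : ∀ w ∈ O, ℓfun w ∈ Metric.ball c R := fun w hw => hw.2
    set Ψ : E × ℝ → ℂ := fun w => (p j w.1 - c) * g (w.1, ℓfun w) with hΨ
    have hΨcont : ContinuousOn Ψ O := by
      apply ContinuousOn.mul
      · exact ContinuousOn.sub
          ((hp j).continuousOn.comp continuous_fst.continuousOn (fun w hw => hOU w hw))
          continuousOn_const
      · apply hgcont.comp
        · apply ContinuousOn.prodMk continuous_fst.continuousOn
          exact hℓcont.mono inter_subset_left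
        · intro w hw
          exact ⟨hOU w hw, hOB w hw⟩
    set K : Set (E × ℝ) := {x₀} ×ˢ Icc (0:ℝ) 1 with hK
    have hKcomp : IsCompact K := isCompact_singleton.prod isCompact_Icc
    have hKO : K ⊆ O := by
      intro w hw
      rw [hK, mem_prod, mem_singleton_iff] at hw
      obtain ⟨hw1, hw2⟩ := hw
      refine ⟨⟨by rw [hw1]; exact hx₀, mem_univ _⟩, ?_⟩
      show ℓfun w ∈ Metric.ball c R
      rw [hℓ]
      simp only [hw1]
      rw [Metric.mem_ball, dist_eq_norm, add_sub_cancel_left, norm_mul, Complex.norm_real,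
        Real.norm_eq_abs, _root_.abs_of_nonneg hw2.1]
      have hb : ‖p j x₀ - c‖ < R := by
        have := hpD j x₀ hx₀
        rwa [Metric.mem_ball, dist_eq_norm] at this
      calc w.2 * ‖p j x₀ - c‖ ≤ 1 * ‖p j x₀ - c‖ :=
            mul_le_mul_of_nonneg_right hw2.2 (norm_nonneg _)
        _ = ‖p j x₀ - c‖ := one_mul _
        _ < R := hb
    obtain ⟨M₀, hM₀⟩ := hKcomp.exists_bound_of_continuousOn (hΨcont.mono hKO)
    set W : Set (E × ℝ) := O ∩ Ψ ⁻¹' (Metric.ball (0:ℂ) (M₀ + 1)) with hW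
    have hWopen : IsOpen W := hΨcont.isOpen_inter_preimage hOopen Metric.isOpen_ball
    have hKW : K ⊆ W := by
      intro w hw
      refine ⟨hKO hw, ?_⟩
      rw [mem_preimage, mem_ball_zero_iff]
      exact lt_of_le_of_lt (hM₀ w hw) (lt_add_one M₀)
    obtain ⟨δ, hδpos, hthick⟩ := hKcomp.exists_thickening_subset_open hWopen hKW
    have hmemW : ∀ u ∈ Metric.ball x₀ δ, ∀ t ∈ Icc (0:ℝ) 1, (u, t) ∈ W := by
      intro u hu t ht
      apply hthick
      rw [Metric.mem_thickening_iff]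
      refine ⟨(x₀, t), ?_, ?_⟩
      · rw [hK, mem_prod, mem_singleton_iff]
        exact ⟨rfl, ht⟩
      · rw [Prod.dist_eq]
        simp only [dist_self]
        rw [max_eq_left dist_nonneg]
        rwa [Metric.mem_ball] at hu
    have hda := differentiableAt_param_integral
      (Φ := fun u t => Ψ (u, t)) (x₀ := x₀) (M := M₀ + 1) hδpos ?_ ?_ ?_
    · exact hda
    · -- holomorphy in u
      intro t ht x hx
      have hxW := hmemW x hx t ht
      have hxU : x ∈ U := hxW.1.1.1
      have hxB : ℓfun (x, t) ∈ Metric.ball c R := hxW.1.2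
      have hpj : DifferentiableAt ℂ (p j) x := (hp j).differentiableAt (hUopen.mem_nhds hxU)
      have hline : DifferentiableAt ℂ (fun u => c + ((t : ℝ) : ℂ) * (p j u - c)) x :=
        ((hpj.sub_const c).const_mul _).const_add c
      have hpair : DifferentiableAt ℂ (fun u => (u, c + ((t : ℝ) : ℂ) * (p j u - c))) x :=
        differentiableAt_id.prodMk hline
      have hgat : DifferentiableAt ℂ g (x, ℓfun (x, t)) :=
        hgdiff.differentiableAt ((hUopen.prod Metric.isOpen_ball).mem_nhds ⟨hxU, hxB⟩)
      have hcomp := hgat.comp x hpair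
      exact (hpj.sub_const c).mul hcomp
    · -- continuity in t
      intro x hx
      apply hΨcont.comp (Continuous.continuousOn (by continuity))
      intro t ht
      exact inter_subset_left (hmemW x hx t ht)
    · -- boundedness
      intro t ht x hx
      have hxW := hmemW x hx t ht
      have := hxW.2
      rw [mem_preimage, mem_ball_zero_iff] at this
      exact this.le
  have hFU : DifferentiableOn ℂ F U := differentiableOn_pi.2 hFj
  have hkey : ∀ u ∈ U, ∀ i j : Fin N,
      gammaIJ N i j (Submodule.Quotient.mk (F u)) =
        pathIntegral (fun z => a u z * ∏ l, (z - p l u) ^ (m l)) (p i u) (p j u) := by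
    intro u hu i j
    have h2 : gammaIJ N i j (Submodule.Quotient.mk (F u)) = F u j - F u i := by
      rw [gammaIJ, Submodule.liftQ_apply]
      simp
    rw [h2, pathIntegral_eq_sub (hfu u hu) (hpD i u hu) (hpD j u hu)]
  refine ⟨?_, fun i => gamma_basis N i, ⟨F, hFU, hkey⟩⟩
  intro i j
  apply DifferentiableOn.congr ((hFj j).sub (hFj i))
  intro u hu
  rw [pathIntegral_eq_sub (hfu u hu) (hpD i u hu) (hpD j u hu)]
  rfl
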